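/- For the task-level weighted objective, for tasks k ≠ l, the derivative of task k's parameters with respect to the weight of task l satisfies ∂θ̂_k/∂σ̃_l = -H_{kk}^{-1} H_{k,K+1} · ∂γ̂/∂σ̃_l, i.e., the between-task influence at the task level is mediated entirely through the shared parameters. -/
import Mathlib


open Matrix

/-- The arrowhead block Hessian of the task-level σ̃-weighted multitask objective at
the minimizer (evaluated at σ̃ = 1). -/
def arrowheadMatrix {K p : ℕ} {d : Fin K → ℕ}
    (Hd : ∀ k, Matrix (Fin (d k)) (Fin (d k)) ℝ)
    (Hr : ∀ k, Matrix (Fin (d k)) (Fin p) ℝ)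
    (Hc : ∀ k, Matrix (Fin p) (Fin (d k)) ℝ)
    (Hcorner : Matrix (Fin p) (Fin p) ℝ) :
    Matrix ((Σ k, Fin (d k)) ⊕ Fin p) ((Σ k, Fin (d k)) ⊕ Fin p) ℝ :=
  Matrix.fromBlocks (Matrix.blockDiagonal' Hd)
    (Matrix.of fun x j => Hr x.1 x.2 j)
    (Matrix.of fun j x => Hc x.1 j x.2)
    Hcorner


private lemma bd_mulVec' {K : ℕ} {d : Fin K → ℕ} (Hd : ∀ k, Matrix (Fin (d k)) (Fin (d k)) ℝ)
    (w : (Σ j, Fin (d j)) → ℝ) (k : Fin K) (i : Fin (d k)) :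
    (Matrix.blockDiagonal' Hd *ᵥ w) ⟨k, i⟩ = (Hd k *ᵥ fun i' => w ⟨k, i'⟩) i := by
  simp only [Matrix.mulVec, dotProduct]
  rw [← Finset.univ_sigma_univ, Finset.sum_sigma]
  rw [Finset.sum_eq_single k]
  · simp [Matrix.blockDiagonal'_apply_eq]
  · intro b _ hb
    apply Finset.sum_eq_zero
    intro x _
    rw [Matrix.blockDiagonal'_apply_ne _ _ _ (Ne.symm hb), zero_mul]
  · simp

/-- Task-level between-task influence (Proposition B.1, Eq. (B.1)). With
`v = ∂ŵ/∂σ̃_l` the derivative of the minimizer of the task-level weighted multitask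
objective `L(w, σ̃) = ∑_j σ̃_j [(1/n_j) ∑_i ℓ_{ji}(θ_j, γ) + Ω_j(θ_j, γ)]` in the
weight `σ̃_l` of task `l ≠ k`, solving (by the implicit function theorem) `H v = -g`
where `g` has the aggregated gradients of task `l`'s losses and regularizer in block
`l` and the shared block (and zero in block `k`), the task-`k` block of `v`
satisfies `∂θ̂_k/∂σ̃_l = -H_{kk}⁻¹ H_{k,K+1} ∂γ̂/∂σ̃_l`: the task-level between-task
influence is mediated entirely through the shared parameters. -/
theorem stmt_16 {K p : ℕ} {d : Fin K → ℕ}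
    (Hd : ∀ k, Matrix (Fin (d k)) (Fin (d k)) ℝ)
    (Hr : ∀ k, Matrix (Fin (d k)) (Fin p) ℝ)
    (Hc : ∀ k, Matrix (Fin p) (Fin (d k)) ℝ)
    (Hcorner : Matrix (Fin p) (Fin p) ℝ)
    (hd : ∀ k, IsUnit (Hd k))
    (N : Matrix (Fin p) (Fin p) ℝ)
    (hNdef : N = Hcorner - ∑ j, Hc j * (Hd j)⁻¹ * Hr j)
    (hN : IsUnit N)
    (k l : Fin K) (hkl : l ≠ k) (nl : ℕ)
    -- gradients of the per-sample losses ℓ_{li} and the regularizer Ω_l at ŵ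
    (glθ : Fin nl → Fin (d l) → ℝ) (gΩθ : Fin (d l) → ℝ)
    (glγ : Fin nl → Fin p → ℝ) (gΩγ : Fin p → ℝ)
    -- ŵ as a function of the task weight σ̃_l, with derivative v at σ̃_l = 1
    (what : ℝ → (((Σ j, Fin (d j)) ⊕ Fin p) → ℝ))
    (v : ((Σ j, Fin (d j)) ⊕ Fin p) → ℝ)
    (hderiv : HasDerivAt what v 1)
    -- differentiated stationarity condition (implicit function theorem): H v = -g
    (hv : (arrowheadMatrix Hd Hr Hc Hcorner) *ᵥ v =
      -(Sum.elim
          (fun x : Σ j, Fin (d j) =>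
            if h : x.1 = l then ((∑ i, glθ i) + gΩθ) (Fin.cast (congrArg d h) x.2) else 0)
          ((∑ i, glγ i) + gΩγ))) :
    (fun i => v (Sum.inl ⟨k, i⟩)) =
      -(((Hd k)⁻¹ * Hr k) *ᵥ (fun j => v (Sum.inr j))) := by
  set a : Fin (d k) → ℝ := fun i => v (Sum.inl ⟨k, i⟩)
  set b : Fin p → ℝ := fun j => v (Sum.inr j)
  have key : Hd k *ᵥ a = -(Hr k *ᵥ b) := by
    funext i
    have h1 := congrFun hv (Sum.inl ⟨k, i⟩)
    rw [arrowheadMatrix, Matrix.fromBlocks_mulVec] at h1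
    simp only [Sum.elim_inl, Pi.add_apply, Pi.neg_apply] at h1
    rw [dif_neg (fun h => hkl h.symm)] at h1
    have h2 : (Matrix.blockDiagonal' Hd *ᵥ (v ∘ Sum.inl)) ⟨k, i⟩ = (Hd k *ᵥ a) i :=
      bd_mulVec' Hd (v ∘ Sum.inl) k i
    have h3 : ((Matrix.of fun (x : Σ j, Fin (d j)) j => Hr x.1 x.2 j) *ᵥ (v ∘ Sum.inr))
        ⟨k, i⟩ = (Hr k *ᵥ b) i := rfl
    rw [h2, h3] at h1
    simp only [Pi.neg_apply]
    linarith
  have hdet : IsUnit (Hd k).det := (Matrix.isUnit_iff_isUnit_det _).mp (hd k)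
  calc a = ((Hd k)⁻¹ * Hd k) *ᵥ a := by rw [Matrix.nonsing_inv_mul _ hdet, Matrix.one_mulVec]
    _ = (Hd k)⁻¹ *ᵥ (Hd k *ᵥ a) := by rw [Matrix.mulVec_mulVec]
    _ = -(((Hd k)⁻¹ * Hr k) *ᵥ b) := by rw [key, Matrix.mulVec_neg, Matrix.mulVec_mulVec]
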